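/- Let (Ω, ℱ, μ) be a probability space and Y : Ω → ℝ a random variable with cumulative distribution function F(t) := μ({ω : Y(ω) ≤ t}). Suppose F is twice differentiable on ℝ with |F''(t)| ≤ B for all t ∈ ℝ. Let φ : ℝ → ℝ be a nonnegative measurable even function with ∫ φ(u) du = 1 and κ := ∫ u²·φ(u) du < ∞, and let Φ(x) := ∫_{−∞}^{x} φ(u) du. Then for every θ ∈ ℝ and every h > 0, | ∫ Φ((θ − Y(ω))/h) dμ(ω) − F(θ) | ≤ (B·κ/2)·h². -/

import Mathlib

open MeasureTheory

open intervalIntegral in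
/-- Second-order Taylor bound: if `F` has derivative `F'`, `F'` has derivative `F''`,
and `|F''| ≤ B`, then `|F x - F θ - F' θ (x - θ)| ≤ B/2 (x - θ)²`. -/
lemma quad_taylor_aux {F F' F'' : ℝ → ℝ}
    (hF' : ∀ t, HasDerivAt F (F' t) t)
    (hF'' : ∀ t, HasDerivAt F' (F'' t) t)
    {B : ℝ} (hB : ∀ t, |F'' t| ≤ B)
    (θ x : ℝ) :
    |F x - F θ - F' θ * (x - θ)| ≤ B / 2 * (x - θ) ^ 2 := by
  have hlip : ∀ a b : ℝ, |F' a - F' b| ≤ B * |a - b| := by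
    intro a b
    have := Convex.norm_image_sub_le_of_norm_hasDerivWithin_le
      (f := F') (f' := F'') (s := (Set.univ : Set ℝ))
      (fun t _ => (hF'' t).hasDerivWithinAt)
      (fun t _ => by simpa [Real.norm_eq_abs] using hB t)
      convex_univ (Set.mem_univ b) (Set.mem_univ a)
    simpa [Real.norm_eq_abs] using this
  set g : ℝ → ℝ := fun t => F t - F θ - F' θ * (t - θ) with hgdef
  have hgd : ∀ t, HasDerivAt g (F' t - F' θ) t := by
    intro t
    have h1 : HasDerivAt (fun t : ℝ => F' θ * (t - θ)) (F' θ) t := by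
      simpa using (((hasDerivAt_id t).sub_const θ).const_mul (F' θ))
    exact ((hF' t).sub_const (F θ)).sub h1
  have hF'cont : Continuous F' :=
    continuous_iff_continuousAt.mpr fun t => (hF'' t).continuousAt
  have hg'cont : Continuous (fun t => F' t - F' θ) := hF'cont.sub continuous_const
  have hftc : ∫ t in θ..x, (F' t - F' θ) = g x - g θ :=
    intervalIntegral.integral_eq_sub_of_hasDerivAt (fun t _ => hgd t)
      (hg'cont.intervalIntegrable θ x)
  have hgθ : g θ = 0 := by simp [hgdef]
  have hgx : g x = ∫ t in θ..x, (F' t - F' θ) := by rw [hftc, hgθ, sub_zero]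
  have hgoal : |g x| ≤ B / 2 * (x - θ) ^ 2 := by
    rcases le_total θ x with hc | hc
    · have hmono : (∫ t in θ..x, |F' t - F' θ|) ≤ ∫ t in θ..x, B * (t - θ) := by
        apply intervalIntegral.integral_mono_on hc
        · exact hg'cont.abs.intervalIntegrable θ x
        · exact ((continuous_const.mul (continuous_id.sub continuous_const)).intervalIntegrable θ x)
        · intro t ht
          have h2 := hlip t θ
          rwa [abs_of_nonneg (by linarith [ht.1] : (0:ℝ) ≤ t - θ)] at h2
      have hcomp : (∫ t in θ..x, B * (t - θ)) = B / 2 * (x - θ) ^ 2 := by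
        rw [intervalIntegral.integral_const_mul]
        have h1 : (∫ t in θ..x, (t - θ)) = ((x - θ) ^ 2 - (θ - θ) ^ 2) / 2 := by
          rw [intervalIntegral.integral_comp_sub_right (fun t => t) θ,
            integral_id]
        rw [h1]; ring
      calc |g x| = ‖∫ t in θ..x, (F' t - F' θ)‖ := by rw [hgx]; rfl
        _ ≤ ∫ t in θ..x, ‖F' t - F' θ‖ := intervalIntegral.norm_integral_le_integral_norm hc
        _ = ∫ t in θ..x, |F' t - F' θ| := by simp [Real.norm_eq_abs]
        _ ≤ ∫ t in θ..x, B * (t - θ) := hmono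
        _ = B / 2 * (x - θ) ^ 2 := hcomp
    · have hmono : (∫ t in x..θ, |F' t - F' θ|) ≤ ∫ t in x..θ, B * (θ - t) := by
        apply intervalIntegral.integral_mono_on hc
        · exact hg'cont.abs.intervalIntegrable x θ
        · exact ((continuous_const.mul (continuous_const.sub continuous_id)).intervalIntegrable x θ)
        · intro t ht
          have h2 := hlip t θ
          rwa [abs_of_nonpos (by linarith [ht.2] : t - θ ≤ (0:ℝ)), neg_sub] at h2
      have hcomp : (∫ t in x..θ, B * (θ - t)) = B / 2 * (x - θ) ^ 2 := by
        rw [intervalIntegral.integral_const_mul]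
        have h1 : (∫ t in x..θ, (θ - t)) = ((θ - x) ^ 2 - (θ - θ) ^ 2) / 2 := by
          rw [intervalIntegral.integral_comp_sub_left (fun t => t) θ,
            integral_id]
        rw [h1]; ring
      calc |g x| = ‖∫ t in x..θ, (F' t - F' θ)‖ := by
            rw [hgx, intervalIntegral.integral_symm]; simp [Real.norm_eq_abs]
        _ ≤ ∫ t in x..θ, ‖F' t - F' θ‖ := intervalIntegral.norm_integral_le_integral_norm hc
        _ = ∫ t in x..θ, |F' t - F' θ| := by simp [Real.norm_eq_abs]
        _ ≤ ∫ t in x..θ, B * (θ - t) := hmono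
        _ = B / 2 * (x - θ) ^ 2 := hcomp
  simpa [hgdef] using hgoal

/-- Smoothing-bias bound of order `h²`: if the CDF `F` of `Y` is twice differentiable
with `|F''| ≤ B`, and `φ` is a nonnegative measurable even kernel integrating to one
with finite second moment `κ = ∫ u² φ(u) du`, and `Φ(x) = ∫_{-∞}^x φ(u) du`, then for
every `θ` and bandwidth `h > 0`,
`|∫ Φ((θ − Y)/h) dμ − F(θ)| ≤ (B κ / 2) h²`. -/
theorem smoothing_bias_bound {Ω : Type*} [MeasurableSpace Ω]
    (μ : Measure Ω) [IsProbabilityMeasure μ]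
    (Y : Ω → ℝ) (hY : Measurable Y)
    (F F' F'' : ℝ → ℝ)
    (hF : ∀ t, F t = (μ {ω | Y ω ≤ t}).toReal)
    (hF' : ∀ t, HasDerivAt F (F' t) t)
    (hF'' : ∀ t, HasDerivAt F' (F'' t) t)
    (B : ℝ) (hB : ∀ t, |F'' t| ≤ B)
    (φ : ℝ → ℝ) (hφmeas : Measurable φ) (hφnn : ∀ u, 0 ≤ φ u)
    (hφeven : ∀ u, φ (-u) = φ u)
    (hφint : Integrable φ) (hφ1 : ∫ u, φ u = 1)
    (hκint : Integrable (fun u => u ^ 2 * φ u))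
    (θ h : ℝ) (hh : 0 < h) :
    |(∫ ω, (∫ u in Set.Iic ((θ - Y ω) / h), φ u) ∂μ) - F θ|
      ≤ B * (∫ u, u ^ 2 * φ u) / 2 * h ^ 2 := by
  classical
  set f : Ω → ℝ → ℝ := fun ω u => if Y ω ≤ θ - h * u then φ u else 0 with hf_def
  have hiff : ∀ ω u, (u ≤ (θ - Y ω) / h ↔ Y ω ≤ θ - h * u) := by
    intro ω u
    rw [le_div_iff₀ hh]
    constructor <;> intro H <;> linarith [mul_comm u h]
  have hfind : ∀ ω, (fun u => f ω u) = Set.indicator (Set.Iic ((θ - Y ω) / h)) φ := by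
    intro ω; funext u
    simp only [hf_def, Set.indicator_apply, Set.mem_Iic]
    by_cases hc : Y ω ≤ θ - h * u
    · rw [if_pos hc, if_pos ((hiff ω u).mpr hc)]
    · rw [if_neg hc, if_neg fun H => hc ((hiff ω u).mp H)]
  have hs : MeasurableSet {p : Ω × ℝ | Y p.1 ≤ θ - h * p.2} :=
    measurableSet_le (hY.comp measurable_fst)
      (measurable_const.sub (measurable_snd.const_mul h))
  have hmeas_unc : Measurable (Function.uncurry f) := by
    have : Function.uncurry f = fun p : Ω × ℝ =>
        if Y p.1 ≤ θ - h * p.2 then φ p.2 else 0 := rfl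
    rw [this]
    exact Measurable.ite hs (hφmeas.comp measurable_snd) measurable_const
  have hf_int : ∀ ω, Integrable (f ω) := by
    intro ω
    rw [show f ω = fun u => f ω u from rfl, hfind ω]
    exact hφint.indicator measurableSet_Iic
  have hfle : ∀ ω u, |f ω u| ≤ φ u := by
    intro ω u
    by_cases hc : Y ω ≤ θ - h * u <;>
      simp [hf_def, hc, abs_of_nonneg (hφnn u), hφnn u]
  have hint_unc : Integrable (Function.uncurry f) (μ.prod volume) := by
    rw [integrable_prod_iff hmeas_unc.aestronglyMeasurable]
    constructor
    · exact Filter.Eventually.of_forall fun ω => hf_int ω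
    · refine Integrable.mono' (integrable_const (1 : ℝ))
        ((hmeas_unc.norm.stronglyMeasurable.integral_prod_right').aestronglyMeasurable)
        (Filter.Eventually.of_forall fun ω => ?_)
      have hnn : 0 ≤ ∫ u, ‖f ω u‖ := integral_nonneg fun u => norm_nonneg _
      show |∫ u, ‖f ω u‖| ≤ 1
      rw [abs_of_nonneg hnn]
      calc (∫ u, ‖f ω u‖) ≤ ∫ u, φ u :=
            integral_mono (hf_int ω).norm hφint fun u => by
              rw [Real.norm_eq_abs]; exact hfle ω u
        _ = 1 := hφ1
  have hLHS : (∫ ω, (∫ u in Set.Iic ((θ - Y ω) / h), φ u) ∂μ)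
      = ∫ u, F (θ - h * u) * φ u := by
    have h1 : ∀ ω, (∫ u in Set.Iic ((θ - Y ω) / h), φ u) = ∫ u, f ω u := by
      intro ω
      rw [hfind ω]
      exact (integral_indicator measurableSet_Iic).symm
    have h2 : ∀ u, (∫ ω, f ω u ∂μ) = F (θ - h * u) * φ u := by
      intro u
      have e : (fun ω => f ω u)
          = Set.indicator {ω | Y ω ≤ θ - h * u} (fun _ => φ u) := by
        funext ω; simp [hf_def, Set.indicator_apply]
      have hms : MeasurableSet {ω | Y ω ≤ θ - h * u} := hY measurableSet_Iic
      rw [e, integral_indicator_const _ hms, hF (θ - h * u)]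
      simp [mul_comm, Measure.real]
    simp_rw [h1]
    rw [integral_integral_swap hint_unc]
    simp_rw [h2]
  have hFcont : Continuous F :=
    continuous_iff_continuousAt.mpr fun t => (hF' t).continuousAt
  have hF01 : ∀ t, 0 ≤ F t ∧ F t ≤ 1 := by
    intro t
    rw [hF t]
    refine ⟨ENNReal.toReal_nonneg, ?_⟩
    calc (μ {ω | Y ω ≤ t}).toReal
        ≤ (μ Set.univ).toReal :=
          ENNReal.toReal_mono (measure_ne_top μ _) (measure_mono (Set.subset_univ _))
      _ = 1 := by simp
  have hG : Continuous fun u : ℝ => F (θ - h * u) :=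
    hFcont.comp (continuous_const.sub (continuous_const.mul continuous_id))
  have hint1 : Integrable (fun u => F (θ - h * u) * φ u) := by
    refine Integrable.mono' hφint
      ((hG.measurable.mul hφmeas).aestronglyMeasurable)
      (Filter.Eventually.of_forall fun u => ?_)
    rw [Real.norm_eq_abs, abs_mul, abs_of_nonneg (hφnn u)]
    have h01 := hF01 (θ - h * u)
    calc |F (θ - h * u)| * φ u ≤ 1 * φ u :=
          mul_le_mul_of_nonneg_right (abs_le.mpr ⟨by linarith [h01.1], h01.2⟩) (hφnn u)
      _ = φ u := one_mul _
  have hint2 : Integrable (fun u => u * φ u) := by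
    refine Integrable.mono' (hφint.add hκint)
      ((measurable_id.mul hφmeas).aestronglyMeasurable)
      (Filter.Eventually.of_forall fun u => ?_)
    rw [Real.norm_eq_abs, abs_mul, abs_of_nonneg (hφnn u)]
    have habs : |u| ≤ 1 + u ^ 2 := by nlinarith [sq_abs u, sq_nonneg (|u| - 1), abs_nonneg u]
    calc |u| * φ u ≤ (1 + u ^ 2) * φ u := mul_le_mul_of_nonneg_right habs (hφnn u)
      _ = φ u + u ^ 2 * φ u := by ring
  have hodd : (∫ u, u * φ u) = 0 := by
    have h1 := integral_neg_eq_self (fun v : ℝ => v * φ v) (volume : Measure ℝ)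
    simp only [hφeven, neg_mul] at h1
    rw [integral_neg] at h1
    linarith
  have e1 : (fun u => (F (θ - h * u) - F θ + F' θ * (h * u)) * φ u)
      = fun u => F (θ - h * u) * φ u - F θ * φ u + (F' θ * h) * (u * φ u) := by
    funext u; ring
  have hint_g : Integrable (fun u => (F (θ - h * u) - F θ + F' θ * (h * u)) * φ u) := by
    rw [e1]
    exact ((hint1.sub (hφint.const_mul (F θ))).add (hint2.const_mul (F' θ * h)))
  have hiA : Integrable (fun u => F (θ - h * u) * φ u - F θ * φ u) :=
    hint1.sub (hφint.const_mul (F θ))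
  have hiB : Integrable (fun u => (F' θ * h) * (u * φ u)) := hint2.const_mul _
  have hsplit : (∫ u, F (θ - h * u) * φ u) - F θ
      = ∫ u, (F (θ - h * u) - F θ + F' θ * (h * u)) * φ u := by
    rw [e1, integral_add hiA hiB, integral_sub hint1 (hφint.const_mul (F θ)),
      integral_const_mul, integral_const_mul, hφ1, hodd]
    ring
  have hptw : ∀ u, |(F (θ - h * u) - F θ + F' θ * (h * u)) * φ u|
      ≤ B / 2 * h ^ 2 * (u ^ 2 * φ u) := by
    intro u
    have ht := quad_taylor_aux hF' hF'' hB θ (θ - h * u)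
    have e : F (θ - h * u) - F θ - F' θ * ((θ - h * u) - θ)
        = F (θ - h * u) - F θ + F' θ * (h * u) := by ring
    rw [e] at ht
    have ht' : |F (θ - h * u) - F θ + F' θ * (h * u)| ≤ B / 2 * (h ^ 2 * u ^ 2) := by
      calc |F (θ - h * u) - F θ + F' θ * (h * u)|
          ≤ B / 2 * ((θ - h * u) - θ) ^ 2 := ht
        _ = B / 2 * (h ^ 2 * u ^ 2) := by ring
    rw [abs_mul, abs_of_nonneg (hφnn u)]
    calc |F (θ - h * u) - F θ + F' θ * (h * u)| * φ u
        ≤ (B / 2 * (h ^ 2 * u ^ 2)) * φ u := mul_le_mul_of_nonneg_right ht' (hφnn u)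
      _ = B / 2 * h ^ 2 * (u ^ 2 * φ u) := by ring
  rw [hLHS, hsplit]
  calc |∫ u, (F (θ - h * u) - F θ + F' θ * (h * u)) * φ u|
      ≤ ∫ u, |(F (θ - h * u) - F θ + F' θ * (h * u)) * φ u| := by
        simpa only [Real.norm_eq_abs] using
          norm_integral_le_integral_norm (μ := volume)
            (fun u => (F (θ - h * u) - F θ + F' θ * (h * u)) * φ u)
    _ ≤ ∫ u, B / 2 * h ^ 2 * (u ^ 2 * φ u) :=
        integral_mono hint_g.abs (hκint.const_mul _) fun u => hptw u
    _ = B / 2 * h ^ 2 * ∫ u, u ^ 2 * φ u := integral_const_mul _ _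
    _ = B * (∫ u, u ^ 2 * φ u) / 2 * h ^ 2 := by ring
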